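/- arXiv:1507.06216 — 2 statements merged into one kernel-verified Lean document; each statement's English description precedes it below -/
import Mathlib

section
/- Let S ⊆ ℂ^m be open and w : S → ℝ upper semicontinuous such that for every s ∈ S and nonzero ξ ∈ ℂ^m there is a holomorphic disc f with f(0) = s, f'(0) = ξ and Λ(w ∘ f)(0) > 0. Let u ∈ C²(S) be such that for every s ∈ S there is a nonzero ξ ∈ ℂ^m with ∂∂̄u(s)(ξ, ξ̄) = 0. Then w − u has no local maximum in S. -/
open Filter MeasureTheory Set Metric

/-- The upper mean-value Laplacian of Lempert:
`Λu(z₀) = limsup_{r→0⁺} r⁻²(∫₀¹ u(z₀ + re^{2πiθ})dθ − u(z₀))`. -/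
noncomputable def lam (u : ℂ → ℝ) (z₀ : ℂ) : ℝ :=
  limsup (fun r : ℝ =>
      ((∫ θ in (0:ℝ)..(1:ℝ),
        u (z₀ + (r:ℂ) * Complex.exp (((2 * Real.pi * θ : ℝ) : ℂ) * Complex.I))) - u z₀) / r ^ 2)
    (nhdsWithin (0:ℝ) (Set.Ioi (0:ℝ)))

lemma quad_est {E F : Type*} [NormedAddCommGroup E] [NormedSpace ℝ E]
    [NormedAddCommGroup F] [NormedSpace ℝ F]
    {g : E → F} {t : Set E} {K : NNReal} (hconv : Convex ℝ t)
    (hd : ∀ z ∈ t, DifferentiableAt ℝ g z)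
    (hlip : LipschitzOnWith K (fderiv ℝ g) t)
    {x y : E} (hx : x ∈ t) (hsub : closedBall x ‖y - x‖ ⊆ t) :
    ‖g y - g x - fderiv ℝ g x (y - x)‖ ≤ K * ‖y - x‖ ^ 2 := by
  have hy' : y ∈ closedBall x ‖y - x‖ := by simp [mem_closedBall, dist_eq_norm]
  have hy : y ∈ t := hsub hy'
  have key := (hconv.inter (convex_closedBall x ‖y - x‖)).norm_image_sub_le_of_norm_fderiv_le'
    (f := g) (φ := fderiv ℝ g x) (C := K * ‖y - x‖)
    (fun z hz => hd z hz.1)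
    (fun z hz => by
      have h1 := hlip.norm_sub_le hz.1 hx
      have h2 : ‖z - x‖ ≤ ‖y - x‖ := by
        have := hz.2; simpa [mem_closedBall, dist_eq_norm] using this
      calc ‖fderiv ℝ g z - fderiv ℝ g x‖ ≤ K * ‖z - x‖ := h1
        _ ≤ K * ‖y - x‖ := by gcongr)
    ⟨hx, by simp⟩ ⟨hy, hy'⟩
  calc ‖g y - g x - fderiv ℝ g x (y - x)‖ ≤ (K * ‖y - x‖) * ‖y - x‖ := key
    _ = K * ‖y - x‖ ^ 2 := by ring


lemma circle_mean_eq_center {E : Type*} [NormedAddCommGroup E] [NormedSpace ℂ E]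
    [CompleteSpace E] {f : ℂ → E} {ε r : ℝ}
    (hf : DifferentiableOn ℂ f (ball (0:ℂ) ε)) (hr : 0 < r) (hrε : r < ε) :
    (∫ θ in (0:ℝ)..(1:ℝ),
      f ((r:ℂ) * Complex.exp (((2 * Real.pi * θ : ℝ) : ℂ) * Complex.I))) = f 0 := by
  have hd : DifferentiableOn ℂ f (closedBall (0:ℂ) r) :=
    hf.mono (closedBall_subset_ball hrε)
  have h0 : (0:ℂ) ∈ ball (0:ℂ) r := by simpa using hr
  have key := hd.circleIntegral_sub_inv_smul h0
  rw [circleIntegral] at key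
  have hne : ∀ θ : ℝ, circleMap 0 r θ ≠ 0 := fun θ => circleMap_ne_center hr.ne'
  have heq : ∀ θ : ℝ, deriv (circleMap 0 r) θ • (circleMap 0 r θ - 0)⁻¹ • f (circleMap 0 r θ)
      = Complex.I • f (circleMap 0 r θ) := by
    intro θ
    rw [deriv_circleMap, smul_smul, sub_zero, mul_comm (circleMap 0 r θ) Complex.I,
      mul_assoc, mul_inv_cancel₀ (hne θ), mul_one]
  simp only [heq] at key
  rw [intervalIntegral.integral_smul] at key
  have key2 : (∫ θ in (0:ℝ)..(2*Real.pi), f (circleMap 0 r θ)) = ((2*Real.pi:ℝ)) • f 0 := by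
    have hI : (Complex.I : ℂ) ≠ 0 := Complex.I_ne_zero
    have h3 := congrArg (fun v => (Complex.I)⁻¹ • v) key
    simp only [smul_smul, inv_mul_cancel₀ hI, one_smul] at h3
    rw [h3]
    have hc : (Complex.I⁻¹ * (2 * ↑Real.pi * Complex.I)) = ((2*Real.pi:ℝ):ℂ) := by
      push_cast
      field_simp
    rw [hc]
    rfl
  have hsub : (∫ θ in (0:ℝ)..(1:ℝ),
      f ((r:ℂ) * Complex.exp (((2 * Real.pi * θ : ℝ) : ℂ) * Complex.I)))
      = (2*Real.pi)⁻¹ • ∫ θ in (0:ℝ)..(2*Real.pi), f (circleMap 0 r θ) := by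
    have h2π : (2*Real.pi : ℝ) ≠ 0 := by positivity
    have h4 := intervalIntegral.integral_comp_mul_left (a := (0:ℝ)) (b := (1:ℝ))
      (fun θ => f (circleMap 0 r θ)) h2π
    simp only [mul_zero, mul_one] at h4
    rw [← h4]
    apply intervalIntegral.integral_congr
    intro θ _
    simp [circleMap]
  rw [hsub, key2, smul_smul, inv_mul_cancel₀ (by positivity : (2*Real.pi:ℝ) ≠ 0), one_smul]


noncomputable def cpt (r θ : ℝ) : ℂ :=
  (r:ℂ) * Complex.exp (((2 * Real.pi * θ : ℝ) : ℂ) * Complex.I)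

lemma cpt_cont (r : ℝ) : Continuous (cpt r) := by
  unfold cpt
  fun_prop

lemma cpt_norm {r : ℝ} (hr : 0 ≤ r) (θ : ℝ) : ‖cpt r θ‖ = r := by
  unfold cpt
  rw [norm_mul]
  simp [Complex.norm_exp, abs_of_nonneg hr]

lemma cpt_integral (r : ℝ) : (∫ θ in (0:ℝ)..1, cpt r θ) = 0 := by
  unfold cpt
  rw [intervalIntegral.integral_const_mul]
  have h1 : ∀ θ : ℝ, Complex.exp (((2 * Real.pi * θ : ℝ):ℂ) * Complex.I)
      = Complex.exp ((2 * (Real.pi:ℂ) * Complex.I) * (θ:ℝ)) := by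
    intro θ; congr 1; push_cast; ring
  rw [intervalIntegral.integral_congr (g := fun θ : ℝ => Complex.exp ((2*(Real.pi:ℂ)*Complex.I) * (θ:ℝ))) (fun θ _ => h1 θ)]
  rw [integral_exp_mul_complex (by simp [Real.pi_ne_zero, Complex.I_ne_zero])]
  simp [Complex.exp_two_pi_mul_I]

lemma cpt_mvp {E : Type*} [NormedAddCommGroup E] [NormedSpace ℂ E] [CompleteSpace E]
    {f : ℂ → E} {ε r : ℝ} (hf : DifferentiableOn ℂ f (ball (0:ℂ) ε))
    (hr : 0 < r) (hrε : r < ε) :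
    (∫ θ in (0:ℝ)..(1:ℝ), f (cpt r θ)) = f 0 := by
  simpa [cpt] using circle_mean_eq_center hf hr hrε

set_option maxHeartbeats 2000000 in
theorem no_local_max_of_strict_discs
    (m : ℕ) (S : Set (Fin m → ℂ)) (hS : IsOpen S)
    (w u : (Fin m → ℂ) → ℝ) (husc : UpperSemicontinuousOn w S)
    (hdisc : ∀ s ∈ S, ∀ ξ : Fin m → ℂ, ξ ≠ 0 →
      ∃ ε > (0:ℝ), ∃ f : ℂ → (Fin m → ℂ),
        DifferentiableOn ℂ f (ball (0:ℂ) ε) ∧ MapsTo f (ball (0:ℂ) ε) S ∧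
        f 0 = s ∧ deriv f 0 = ξ ∧ 0 < lam (fun z => w (f z)) 0)
    (hu : ContDiffOn ℝ 2 u S)
    -- for every s ∈ S there is a nonzero direction ξ in which the complex Hessian
    -- of u vanishes, i.e. Λ of u along the complex line through s in direction ξ is 0
    (hflat : ∀ s ∈ S, ∃ ξ : Fin m → ℂ, ξ ≠ 0 ∧
      lam (fun z : ℂ => u (s + z • ξ)) 0 = 0) :
    ∀ s ∈ S, ¬ IsLocalMax (fun x => w x - u x) s := by
  intro s hs hmax
  obtain ⟨ξ, hξ, hflat0⟩ := hflat s hs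
  obtain ⟨ε, hε, f, hfd, hmaps, hf0, hf', hlam⟩ := hdisc s hs ξ hξ
  have h0ε : (0:ℂ) ∈ ball (0:ℂ) ε := by simpa using hε
  -- Lipschitz ball for fderiv u
  have huc2 : ContDiffAt ℝ 2 u s := hu.contDiffAt (hS.mem_nhds hs)
  have hdu1 : ContDiffAt ℝ 1 (fderiv ℝ u) s := huc2.fderiv_right (by norm_num)
  obtain ⟨Ku, t, ht, hlipu⟩ := hdu1.exists_lipschitzOnWith
  have hmax' : ∀ᶠ x in nhds s, w x - u x ≤ w s - u s := hmax
  have hnbhd : t ∩ S ∩ {x | w x - u x ≤ w s - u s} ∈ nhds s :=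
    Filter.inter_mem (Filter.inter_mem ht (hS.mem_nhds hs)) hmax'
  obtain ⟨ρ, hρ0, hball⟩ := Metric.mem_nhds_iff.1 hnbhd
  have hballS : ball s ρ ⊆ S := fun x hx => (hball hx).1.2
  have hballmax : ∀ x ∈ ball s ρ, w x - u x ≤ w s - u s := fun x hx => (hball hx).2
  have hlipu' : LipschitzOnWith Ku (fderiv ℝ u) (ball s ρ) :=
    hlipu.mono fun x hx => (hball hx).1.1
  have hud : ∀ z ∈ ball s ρ, DifferentiableAt ℝ u z := fun z hz =>
    (hu.contDiffAt (hS.mem_nhds (hballS hz))).differentiableAt (by norm_num)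
  have hucont : ContinuousOn u S := hu.continuousOn
  -- f side
  have hfc2 : ContDiffAt ℝ 2 f 0 :=
    (((hfd.contDiffOn (n := 2) isOpen_ball).contDiffAt
      (isOpen_ball.mem_nhds h0ε)).restrict_scalars ℝ)
  have hdf1 : ContDiffAt ℝ 1 (fderiv ℝ f) 0 := hfc2.fderiv_right (by norm_num)
  obtain ⟨Kf, tf, htf, hlipf⟩ := hdf1.exists_lipschitzOnWith
  obtain ⟨ρf, hρf0, hballf⟩ := Metric.mem_nhds_iff.1
    (Filter.inter_mem htf (isOpen_ball.mem_nhds h0ε))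
  have hballf_ε : ball (0:ℂ) ρf ⊆ ball 0 ε := fun x hx => (hballf hx).2
  have hlipf' : LipschitzOnWith Kf (fderiv ℝ f) (ball (0:ℂ) ρf) :=
    hlipf.mono fun x hx => (hballf hx).1
  have hfdiff : ∀ z ∈ ball (0:ℂ) ρf, DifferentiableAt ℝ f z := fun z hz =>
    ((hfd.differentiableAt (isOpen_ball.mem_nhds (hballf_ε hz))).restrictScalars ℝ)
  have hfd0 : DifferentiableAt ℂ f 0 := hfd.differentiableAt (isOpen_ball.mem_nhds h0ε)
  have hA : ∀ z : ℂ, fderiv ℝ f 0 z = z • ξ := by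
    intro z
    have h1 : fderiv ℝ f 0 = (fderiv ℂ f 0).restrictScalars ℝ :=
      (hfd0.hasFDerivAt.restrictScalars ℝ).fderiv
    have h2 : fderiv ℂ f 0 z = z • (fderiv ℂ f 0 1) := by
      conv_lhs => rw [show z = z • (1:ℂ) by simp]
      exact (fderiv ℂ f 0).map_smul z 1
    have h3 : fderiv ℂ f 0 1 = ξ := by rw [fderiv_apply_one_eq_deriv, hf']
    rw [h1]
    simpa [h2, h3] using rfl
  -- quadratic estimates
  have hquadu : ∀ x y : Fin m → ℂ, x ∈ ball s ρ → closedBall x ‖y - x‖ ⊆ ball s ρ →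
      |u y - u x - fderiv ℝ u x (y - x)| ≤ Ku * ‖y - x‖^2 := by
    intro x y hx hsub
    have := quad_est (convex_ball s ρ) hud hlipu' hx hsub
    simpa [Real.norm_eq_abs] using this
  have hquadf : ∀ z : ℂ, ‖z‖ < ρf →
      ‖f z - (s + z • ξ)‖ ≤ Kf * ‖z‖^2 := by
    intro z hz
    have h0m : (0:ℂ) ∈ ball (0:ℂ) ρf := mem_ball_self hρf0
    have hsub : closedBall (0:ℂ) ‖z - 0‖ ⊆ ball (0:ℂ) ρf := by
      rw [sub_zero]; exact closedBall_subset_ball hz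
    have := quad_est (convex_ball _ _) hfdiff hlipf' h0m hsub
    rw [sub_zero] at this
    have heq : f z - (s + z • ξ) = f z - f 0 - fderiv ℝ f 0 z := by
      rw [hf0, hA]; abel
    rw [heq]; exact this
  -- rewrite lam via cpt
  set Qw : ℝ → ℝ := fun r => ((∫ θ in (0:ℝ)..1, w (f (cpt r θ))) - w s) / r ^ 2 with hQwdef
  set Qh : ℝ → ℝ := fun r => ((∫ θ in (0:ℝ)..1, u (s + cpt r θ • ξ)) - u s) / r ^ 2 with hQhdef
  have hlam' : lam (fun z => w (f z)) 0
      = limsup Qw (nhdsWithin (0:ℝ) (Set.Ioi 0)) := by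
    rw [lam, hQwdef]
    congr 1
    funext r
    simp only [zero_add, hf0, cpt]
  have hflat' : limsup Qh (nhdsWithin (0:ℝ) (Set.Ioi 0)) = 0 := by
    have heqh : limsup Qh (nhdsWithin (0:ℝ) (Set.Ioi 0))
        = lam (fun z : ℂ => u (s + z • ξ)) 0 := by
      rw [lam, hQhdef]
      congr 1
      funext r
      simp only [zero_add, zero_smul, add_zero, cpt]
    rw [heqh, hflat0]
  set c := lam (fun z => w (f z)) 0 with hcdef
  have hc : 0 < c := hlam
  set δ := c / 4 with hδdef
  have hδ : 0 < δ := by positivity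
  set Cu : ℝ := (Ku:ℝ) * (Kf:ℝ)^2 + (Ku:ℝ) * (Kf:ℝ) * ‖ξ‖ with hCudef
  have hCu0 : 0 ≤ Cu := by positivity
  -- main pointwise estimates
  have hmain : ∀ r : ℝ, 0 < r → r < ε → r < ρf → r ≤ 1 → ‖ξ‖ * r + (Kf:ℝ) * r^2 < ρ →
      (|Qh r| ≤ (Ku:ℝ) * ‖ξ‖^2) ∧
      (IntervalIntegrable (fun θ => w (f (cpt r θ))) volume 0 1 → Qw r ≤ Qh r + Cu * r) ∧
      (¬ IntervalIntegrable (fun θ => w (f (cpt r θ))) volume 0 1 → Qw r = -(w s) / r^2) := by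
    intro r h0r hrε hrρf hr1 hpoly
    have hr2 : (0:ℝ) < r^2 := by positivity
    have hznorm : ∀ θ : ℝ, ‖cpt r θ‖ = r := cpt_norm h0r.le
    have hzballε : ∀ θ : ℝ, cpt r θ ∈ ball (0:ℂ) ε := by
      intro θ; rw [mem_ball_zero_iff, hznorm]; exact hrε
    have hKf0 : (0:ℝ) ≤ (Kf:ℝ) := Kf.coe_nonneg
    have hKu0 : (0:ℝ) ≤ (Ku:ℝ) := Ku.coe_nonneg
    have hgz : ∀ θ : ℝ, ‖f (cpt r θ) - (s + cpt r θ • ξ)‖ ≤ (Kf:ℝ) * r^2 := by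
      intro θ
      have h := hquadf (cpt r θ) (by rw [hznorm]; exact hrρf)
      rwa [hznorm] at h
    have hazs : ∀ θ : ℝ, ‖(s + cpt r θ • ξ) - s‖ = r * ‖ξ‖ := by
      intro θ; rw [add_sub_cancel_left, norm_smul, hznorm]
    have hrξρ : r * ‖ξ‖ < ρ := by nlinarith [mul_nonneg hKf0 (sq_nonneg r)]
    have haz_ball : ∀ θ : ℝ, s + cpt r θ • ξ ∈ ball s ρ := by
      intro θ
      rw [mem_ball, dist_eq_norm, hazs]
      exact hrξρ
    have hfz_ball : ∀ θ : ℝ, f (cpt r θ) ∈ ball s ρ := by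
      intro θ
      have h3 := dist_triangle (f (cpt r θ)) (s + cpt r θ • ξ) s
      have h4 : dist (f (cpt r θ)) (s + cpt r θ • ξ) ≤ (Kf:ℝ) * r^2 := by
        rw [dist_eq_norm]; exact hgz θ
      have h5 : dist (s + cpt r θ • ξ) s = r * ‖ξ‖ := by rw [dist_eq_norm]; exact hazs θ
      rw [mem_ball]
      nlinarith
    have hcball : ∀ θ : ℝ, closedBall (s + cpt r θ • ξ)
        ‖f (cpt r θ) - (s + cpt r θ • ξ)‖ ⊆ ball s ρ := by
      intro θ p hp
      rw [mem_closedBall] at hp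
      have h3 := dist_triangle p (s + cpt r θ • ξ) s
      have h5 : dist (s + cpt r θ • ξ) s = r * ‖ξ‖ := by rw [dist_eq_norm]; exact hazs θ
      rw [mem_ball]
      nlinarith [hgz θ]
    -- continuity and integrability
    have hcont_z : Continuous fun θ : ℝ => cpt r θ := cpt_cont r
    have hcont_f : Continuous fun θ : ℝ => f (cpt r θ) :=
      hfd.continuousOn.comp_continuous hcont_z hzballε
    have hcont_uf : Continuous fun θ : ℝ => u (f (cpt r θ)) :=
      hucont.comp_continuous hcont_f (fun θ => hmaps (hzballε θ))
    have hcont_az : Continuous fun θ : ℝ => s + cpt r θ • ξ := by fun_prop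
    have hcont_ua : Continuous fun θ : ℝ => u (s + cpt r θ • ξ) :=
      hucont.comp_continuous hcont_az (fun θ => hballS (haz_ball θ))
    have hcont_g : Continuous fun θ : ℝ => f (cpt r θ) - (s + cpt r θ • ξ) :=
      hcont_f.sub hcont_az
    have hint_uf : IntervalIntegrable (fun θ : ℝ => u (f (cpt r θ))) volume 0 1 :=
      hcont_uf.intervalIntegrable 0 1
    have hint_ua : IntervalIntegrable (fun θ : ℝ => u (s + cpt r θ • ξ)) volume 0 1 :=
      hcont_ua.intervalIntegrable 0 1
    have hint_g : IntervalIntegrable (fun θ : ℝ => f (cpt r θ) - (s + cpt r θ • ξ)) volume 0 1 :=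
      hcont_g.intervalIntegrable 0 1
    -- integral identities
    have hMVP : (∫ θ in (0:ℝ)..1, f (cpt r θ)) = s := by rw [cpt_mvp hfd h0r hrε, hf0]
    have hintaz : (∫ θ in (0:ℝ)..1, (s + cpt r θ • ξ)) = s := by
      rw [intervalIntegral.integral_add intervalIntegrable_const
        ((show Continuous fun θ : ℝ => cpt r θ • ξ from hcont_z.smul continuous_const).intervalIntegrable 0 1),
        intervalIntegral.integral_smul_const, cpt_integral, zero_smul, add_zero,
        intervalIntegral.integral_const]
      norm_num
    have hgint : (∫ θ in (0:ℝ)..1, (f (cpt r θ) - (s + cpt r θ • ξ))) = 0 := by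
      rw [intervalIntegral.integral_sub (hcont_f.intervalIntegrable 0 1)
        (hcont_az.intervalIntegrable 0 1), hMVP, hintaz, sub_self]
    have hTg : (∫ θ in (0:ℝ)..1, fderiv ℝ u s (f (cpt r θ) - (s + cpt r θ • ξ))) = 0 := by
      rw [ContinuousLinearMap.intervalIntegral_comp_comm _ hint_g, hgint, map_zero]
    have hTa : (∫ θ in (0:ℝ)..1, fderiv ℝ u s (cpt r θ • ξ)) = 0 := by
      rw [ContinuousLinearMap.intervalIntegral_comp_comm _
        ((show Continuous fun θ : ℝ => cpt r θ • ξ from hcont_z.smul continuous_const).intervalIntegrable 0 1),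
        intervalIntegral.integral_smul_const, cpt_integral, zero_smul, map_zero]
    have hTa_int : IntervalIntegrable (fun θ => fderiv ℝ u s (cpt r θ • ξ)) volume 0 1 :=
      ((fderiv ℝ u s).continuous.comp (hcont_z.smul continuous_const)).intervalIntegrable 0 1
    have hTg_int : IntervalIntegrable
        (fun θ => fderiv ℝ u s (f (cpt r θ) - (s + cpt r θ • ξ))) volume 0 1 :=
      ((fderiv ℝ u s).continuous.comp hcont_g).intervalIntegrable 0 1
    -- K1
    have hK1 : |(∫ θ in (0:ℝ)..1, u (s + cpt r θ • ξ)) - u s| ≤ (Ku:ℝ) * ‖ξ‖^2 * r^2 := by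
      have hsplit : (∫ θ in (0:ℝ)..1, u (s + cpt r θ • ξ)) - u s
          = ∫ θ in (0:ℝ)..1,
            (u (s + cpt r θ • ξ) - u s - fderiv ℝ u s (cpt r θ • ξ)) := by
        rw [intervalIntegral.integral_sub (hint_ua.sub intervalIntegrable_const) hTa_int,
          intervalIntegral.integral_sub hint_ua intervalIntegrable_const, hTa, sub_zero,
          intervalIntegral.integral_const]
        norm_num
      rw [hsplit, ← Real.norm_eq_abs]
      have hb := intervalIntegral.norm_integral_le_of_norm_le_const
        (C := (Ku:ℝ) * ‖ξ‖^2 * r^2)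
        (f := fun θ : ℝ => u (s + cpt r θ • ξ) - u s - fderiv ℝ u s (cpt r θ • ξ))
        (a := (0:ℝ)) (b := 1) ?_
      · simpa using hb
      · intro θ _
        have hq := hquadu s (s + cpt r θ • ξ) (mem_ball_self hρ0)
          (by rw [hazs]; exact closedBall_subset_ball hrξρ)
        rw [add_sub_cancel_left] at hq
        rw [Real.norm_eq_abs]
        calc |u (s + cpt r θ • ξ) - u s - fderiv ℝ u s (cpt r θ • ξ)|
            ≤ (Ku:ℝ) * ‖cpt r θ • ξ‖^2 := hq
          _ = (Ku:ℝ) * ‖ξ‖^2 * r^2 := by rw [norm_smul, hznorm]; ring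
    -- K2
    have hK2 : |(∫ θ in (0:ℝ)..1, u (f (cpt r θ)))
        - ∫ θ in (0:ℝ)..1, u (s + cpt r θ • ξ)| ≤ Cu * r^3 := by
      have hsplit : (∫ θ in (0:ℝ)..1, u (f (cpt r θ)))
            - (∫ θ in (0:ℝ)..1, u (s + cpt r θ • ξ))
          = ∫ θ in (0:ℝ)..1, (u (f (cpt r θ)) - u (s + cpt r θ • ξ)
              - fderiv ℝ u s (f (cpt r θ) - (s + cpt r θ • ξ))) := by
        rw [intervalIntegral.integral_sub (hint_uf.sub hint_ua) hTg_int,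
          intervalIntegral.integral_sub hint_uf hint_ua, hTg, sub_zero]
      rw [hsplit, ← Real.norm_eq_abs]
      have hb := intervalIntegral.norm_integral_le_of_norm_le_const (C := Cu * r^3)
        (f := fun θ : ℝ => u (f (cpt r θ)) - u (s + cpt r θ • ξ)
          - fderiv ℝ u s (f (cpt r θ) - (s + cpt r θ • ξ)))
        (a := (0:ℝ)) (b := 1) ?_
      · simpa using hb
      · intro θ _
        have hq := hquadu (s + cpt r θ • ξ) (f (cpt r θ)) (haz_ball θ) (hcball θ)
        have h6 : ‖fderiv ℝ u (s + cpt r θ • ξ) - fderiv ℝ u s‖ ≤ (Ku:ℝ) * (r * ‖ξ‖) := by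
          have h7 := hlipu'.norm_sub_le (haz_ball θ) (mem_ball_self hρ0)
          rwa [hazs] at h7
        have hB : |fderiv ℝ u (s + cpt r θ • ξ) (f (cpt r θ) - (s + cpt r θ • ξ))
              - fderiv ℝ u s (f (cpt r θ) - (s + cpt r θ • ξ))|
            ≤ ((Ku:ℝ) * (r * ‖ξ‖)) * ((Kf:ℝ) * r^2) := by
          rw [← ContinuousLinearMap.sub_apply, ← Real.norm_eq_abs]
          calc ‖(fderiv ℝ u (s + cpt r θ • ξ) - fderiv ℝ u s)
                (f (cpt r θ) - (s + cpt r θ • ξ))‖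
              ≤ ‖fderiv ℝ u (s + cpt r θ • ξ) - fderiv ℝ u s‖
                * ‖f (cpt r θ) - (s + cpt r θ • ξ)‖ :=
                ContinuousLinearMap.le_opNorm _ _
            _ ≤ ((Ku:ℝ) * (r * ‖ξ‖)) * ((Kf:ℝ) * r^2) := by
                apply mul_le_mul h6 (hgz θ) (norm_nonneg _)
                positivity
        have hsum : u (f (cpt r θ)) - u (s + cpt r θ • ξ)
              - fderiv ℝ u s (f (cpt r θ) - (s + cpt r θ • ξ))
            = (u (f (cpt r θ)) - u (s + cpt r θ • ξ)
              - fderiv ℝ u (s + cpt r θ • ξ) (f (cpt r θ) - (s + cpt r θ • ξ)))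
            + (fderiv ℝ u (s + cpt r θ • ξ) (f (cpt r θ) - (s + cpt r θ • ξ))
              - fderiv ℝ u s (f (cpt r θ) - (s + cpt r θ • ξ))) := by ring
        rw [Real.norm_eq_abs]
        have hfinal : |u (f (cpt r θ)) - u (s + cpt r θ • ξ)
            - fderiv ℝ u s (f (cpt r θ) - (s + cpt r θ • ξ))| ≤ Cu * r^3 := by
          rw [hsum]
          have htri := abs_add_le (u (f (cpt r θ)) - u (s + cpt r θ • ξ)
              - fderiv ℝ u (s + cpt r θ • ξ) (f (cpt r θ) - (s + cpt r θ • ξ)))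
            (fderiv ℝ u (s + cpt r θ • ξ) (f (cpt r θ) - (s + cpt r θ • ξ))
              - fderiv ℝ u s (f (cpt r θ) - (s + cpt r θ • ξ)))
          have hg2 : ‖f (cpt r θ) - (s + cpt r θ • ξ)‖^2 ≤ ((Kf:ℝ) * r^2)^2 :=
            pow_le_pow_left₀ (norm_nonneg _) (hgz θ) 2
          have hr34 : r^4 ≤ r^3 := by
            nlinarith [pow_nonneg h0r.le 3, mul_le_mul_of_nonneg_left hr1 (pow_nonneg h0r.le 3)]
          rw [hCudef]
          linarith [htri, hq, hB, mul_le_mul_of_nonneg_left hg2 hKu0,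
            mul_le_mul_of_nonneg_left hr34 (mul_nonneg hKu0 (mul_nonneg hKf0 hKf0))]
        exact hfinal
    refine ⟨?_, ?_, ?_⟩
    · -- |Qh r| ≤ Ku ‖ξ‖^2
      have : Qh r = ((∫ θ in (0:ℝ)..1, u (s + cpt r θ • ξ)) - u s) / r ^ 2 := rfl
      rw [this, abs_div, abs_of_pos hr2, div_le_iff₀ hr2]
      calc |(∫ θ in (0:ℝ)..1, u (s + cpt r θ • ξ)) - u s|
          ≤ (Ku:ℝ) * ‖ξ‖^2 * r^2 := hK1
        _ = (Ku:ℝ) * ‖ξ‖^2 * r^2 := rfl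
    · intro hint
      have hmono : (∫ θ in (0:ℝ)..1, w (f (cpt r θ)))
          ≤ ∫ θ in (0:ℝ)..1, (u (f (cpt r θ)) + (w s - u s)) := by
        apply intervalIntegral.integral_mono_on (by norm_num) hint
          ((hcont_uf.add continuous_const).intervalIntegrable 0 1)
        intro θ _
        have := hballmax _ (hfz_ball θ)
        simp only [Pi.add_apply]
        linarith
      rw [intervalIntegral.integral_add hint_uf intervalIntegrable_const,
        intervalIntegral.integral_const] at hmono
      have hig := (abs_le.1 hK2).2
      have h7 : (∫ θ in (0:ℝ)..1, w (f (cpt r θ))) - w s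
          ≤ ((∫ θ in (0:ℝ)..1, u (s + cpt r θ • ξ)) - u s) + Cu * r^3 := by
        simp only [smul_eq_mul] at hmono
        nlinarith [hmono, hig]
      have hQwr : Qw r = ((∫ θ in (0:ℝ)..1, w (f (cpt r θ))) - w s) / r ^ 2 := rfl
      have hQhr : Qh r = ((∫ θ in (0:ℝ)..1, u (s + cpt r θ • ξ)) - u s) / r ^ 2 := rfl
      rw [hQwr, hQhr]
      rw [div_le_iff₀ hr2]
      have hexp : (((∫ θ in (0:ℝ)..1, u (s + cpt r θ • ξ)) - u s) / r ^ 2 + Cu * r) * r ^ 2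
          = ((∫ θ in (0:ℝ)..1, u (s + cpt r θ • ξ)) - u s) + Cu * r^3 := by
        field_simp
      rw [hexp]
      exact h7
    · intro hnint
      have hz : (∫ θ in (0:ℝ)..1, w (f (cpt r θ))) = 0 := intervalIntegral.integral_undef hnint
      have hQwr : Qw r = ((∫ θ in (0:ℝ)..1, w (f (cpt r θ))) - w s) / r ^ 2 := rfl
      rw [hQwr, hz, zero_sub, neg_div]
  -- choice of the small threshold
  obtain ⟨k, hk0, hkP⟩ : ∃ k > (0:ℝ), ∀ r : ℝ, 0 < r → r < k →
      (r < ε ∧ r < ρf ∧ r ≤ 1 ∧ ‖ξ‖ * r + (Kf:ℝ) * r^2 < ρ ∧ Cu * r ≤ δ) := by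
    refine ⟨min ε (min ρf (min 1 (min (ρ/(‖ξ‖ + (Kf:ℝ) + 1)) (δ/(Cu+1))))), by positivity, ?_⟩
    intro r h0r hrk
    have h1 : r < ε := lt_of_lt_of_le hrk (min_le_left _ _)
    have h2 : r < ρf := lt_of_lt_of_le hrk ((min_le_right _ _).trans (min_le_left _ _))
    have h3 : r ≤ 1 := (lt_of_lt_of_le hrk
      ((min_le_right _ _).trans ((min_le_right _ _).trans (min_le_left _ _)))).le
    have h4 : r < ρ/(‖ξ‖ + (Kf:ℝ) + 1) := lt_of_lt_of_le hrk
      ((min_le_right _ _).trans ((min_le_right _ _).trans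
        ((min_le_right _ _).trans (min_le_left _ _))))
    have h5 : r < δ/(Cu+1) := lt_of_lt_of_le hrk
      ((min_le_right _ _).trans ((min_le_right _ _).trans
        ((min_le_right _ _).trans (min_le_right _ _))))
    have hD : (0:ℝ) < ‖ξ‖ + (Kf:ℝ) + 1 := by positivity
    have h4' : r * (‖ξ‖ + (Kf:ℝ) + 1) < ρ := (lt_div_iff₀ hD).1 h4
    have h5' : r * (Cu + 1) < δ := (lt_div_iff₀ (by positivity : (0:ℝ) < Cu + 1)).1 h5
    have hKf' : (0:ℝ) ≤ (Kf:ℝ) := Kf.coe_nonneg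
    refine ⟨h1, h2, h3, ?_, ?_⟩
    · have hfr : (Kf:ℝ)*r^2 ≤ (Kf:ℝ)*r := by
        nlinarith [mul_le_mul_of_nonneg_left h3 (mul_nonneg hKf' h0r.le)]
      nlinarith [h4', hfr, h0r]
    · nlinarith [h5', h0r, hCu0]
  -- eventual membership
  have hEv : ∀ᶠ r in nhdsWithin (0:ℝ) (Set.Ioi 0), (0 < r ∧ r < k) :=
    eventually_of_mem (Ioo_mem_nhdsGT_of_mem ⟨le_refl (0:ℝ), hk0⟩)
      (fun r hr => ⟨hr.1, hr.2⟩)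
  -- extract a good upper bound from the flatness hypothesis
  have hAh_inf : sInf {x | ∀ᶠ r in nhdsWithin (0:ℝ) (Set.Ioi 0), Qh r ≤ x} = 0 := by
    rw [← Filter.limsup_eq]
    exact hflat'
  have hAh_ne : ((Ku:ℝ) * ‖ξ‖^2) ∈
      {x | ∀ᶠ r in nhdsWithin (0:ℝ) (Set.Ioi 0), Qh r ≤ x} := by
    refine hEv.mono ?_
    rintro r ⟨h0r, hrk⟩
    obtain ⟨h1, h2, h3, h4, _⟩ := hkP r h0r hrk
    exact (abs_le.1 (hmain r h0r h1 h2 h3 h4).1).2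
  obtain ⟨a, ha_mem, haδ⟩ : ∃ a ∈
      {x | ∀ᶠ r in nhdsWithin (0:ℝ) (Set.Ioi 0), Qh r ≤ x}, a < δ := by
    by_contra hcon
    push_neg at hcon
    have : δ ≤ sInf {x | ∀ᶠ r in nhdsWithin (0:ℝ) (Set.Ioi 0), Qh r ≤ x} :=
      le_csInf ⟨_, hAh_ne⟩ hcon
    rw [hAh_inf] at this
    linarith
  -- the key contradiction device
  have key : ∀ b : ℝ, b ≤ c/2 → (∀ᶠ r in nhdsWithin (0:ℝ) (Set.Ioi 0), Qw r ≤ b) → False := by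
    intro b hb2 hb
    have hcs : c = sInf {x | ∀ᶠ r in nhdsWithin (0:ℝ) (Set.Ioi 0), Qw r ≤ x} :=
      hlam'.trans Filter.limsup_eq
    by_cases hbdd : BddBelow {x | ∀ᶠ r in nhdsWithin (0:ℝ) (Set.Ioi 0), Qw r ≤ x}
    · have : c ≤ b := by rw [hcs]; exact csInf_le hbdd hb
      linarith
    · have : c = 0 := by rw [hcs]; exact Real.sInf_of_not_bddBelow hbdd
      linarith
  by_cases hws : 0 ≤ w s
  · refine key (max (a + δ) 0) ?_ ?_
    · apply max_le <;> [linarith; linarith]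
    · filter_upwards [hEv, ha_mem] with r hr hQhr
      obtain ⟨h0r, hrk⟩ := hr
      obtain ⟨h1, h2, h3, h4, h5⟩ := hkP r h0r hrk
      obtain ⟨hM1, hM2, hM3⟩ := hmain r h0r h1 h2 h3 h4
      by_cases hint : IntervalIntegrable (fun θ => w (f (cpt r θ))) volume 0 1
      · have := hM2 hint
        have hle : Qw r ≤ a + δ := by linarith
        exact le_trans hle (le_max_left _ _)
      · rw [hM3 hint]
        have hle : -(w s)/r^2 ≤ 0 := by
          apply div_nonpos_of_nonpos_of_nonneg <;> [linarith; positivity]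
        exact le_trans hle (le_max_right _ _)
  · push_neg at hws
    by_cases hev : ∀ᶠ r in nhdsWithin (0:ℝ) (Set.Ioi 0),
        IntervalIntegrable (fun θ => w (f (cpt r θ))) volume 0 1
    · refine key (a + δ) (by linarith) ?_
      filter_upwards [hEv, ha_mem, hev] with r hr hQhr hint
      obtain ⟨h0r, hrk⟩ := hr
      obtain ⟨h1, h2, h3, h4, h5⟩ := hkP r h0r hrk
      obtain ⟨hM1, hM2, hM3⟩ := hmain r h0r h1 h2 h3 h4
      have := hM2 hint
      linarith
    · have hfreq : ∃ᶠ r in nhdsWithin (0:ℝ) (Set.Ioi 0),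
          ¬ IntervalIntegrable (fun θ => w (f (cpt r θ))) volume 0 1 :=
        Filter.not_eventually.1 hev
      have htend : Tendsto (fun r : ℝ => -(w s)/r^2)
          (nhdsWithin (0:ℝ) (Set.Ioi 0)) atTop := by
        have h1 : Tendsto (fun r:ℝ => r^2) (nhdsWithin (0:ℝ) (Set.Ioi 0))
            (nhdsWithin (0:ℝ) (Set.Ioi 0)) := by
          apply tendsto_nhdsWithin_of_tendsto_nhds_of_eventually_within
          · have h2 := (continuous_pow 2).tendsto (0:ℝ)
            simpa using h2.mono_left nhdsWithin_le_nhds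
          · exact eventually_mem_nhdsWithin.mono (fun r hr => mem_Ioi.2 (pow_pos hr 2))
        have h2 := tendsto_inv_nhdsGT_zero.comp h1
        have h3 : Tendsto (fun r:ℝ => -(w s) * (r^2)⁻¹)
            (nhdsWithin (0:ℝ) (Set.Ioi 0)) atTop :=
          h2.const_mul_atTop (by linarith : (0:ℝ) < -(w s))
        simpa [div_eq_mul_inv, Function.comp] using h3
      have hAw_empty : {x | ∀ᶠ r in nhdsWithin (0:ℝ) (Set.Ioi 0), Qw r ≤ x} = ∅ := by
        ext x
        simp only [mem_setOf_eq, mem_empty_iff_false, iff_false]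
        intro hx
        obtain ⟨r, hnint, hQle, hgt, h0r, hrk⟩ :=
          (hfreq.and_eventually (hx.and ((htend.eventually_gt_atTop x).and hEv))).exists
        obtain ⟨h1, h2, h3, h4, h5⟩ := hkP r h0r hrk
        obtain ⟨hM1, hM2, hM3⟩ := hmain r h0r h1 h2 h3 h4
        rw [hM3 hnint] at hQle
        linarith
      have : c = 0 := by
        rw [hlam'.trans Filter.limsup_eq, hAw_empty, Real.sInf_empty]
      linarith
end

section
/- Let χ : ℝ → ℝ be continuous with χ(t) = 0 for t ≤ 0, χ(t) > 0 for t > 0, and liminf_{t→∞} χ(t)/t > 0. Let c = a − b > 0. Then lim_{t→∞} ∫_{|y| ≥ 1, y ∈ ℝ^c} exp(−χ(t + t·log|y|²)) dy = 0. -/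
open Filter MeasureTheory Set

theorem tail_integral_tendsto_zero
    (χ : ℝ → ℝ) (hχcont : Continuous χ)
    (hχ0 : ∀ t ≤ (0:ℝ), χ t = 0) (hχpos : ∀ t > (0:ℝ), 0 < χ t)
    (hχlin : 0 < atTop.liminf (fun t => χ t / t))
    (a b : ℕ) (hab : b < a) (c : ℕ) (hc : c = a - b) :
    Tendsto (fun t : ℝ =>
        ∫ y in {y : EuclideanSpace ℝ (Fin c) | 1 ≤ ‖y‖},
          Real.exp (-(χ (t + t * Real.log (‖y‖ ^ 2)))))
      atTop (nhds 0) := by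
  -- extract δ > 0 with eventually δ ≤ χ t / t
  obtain ⟨δ, hδS, hδpos⟩ : ∃ δ ∈ {a : ℝ | ∀ᶠ t in atTop, a ≤ χ t / t}, (0:ℝ) < δ := by
    rw [Filter.liminf_eq] at hχlin
    have hne : {a : ℝ | ∀ᶠ t in atTop, a ≤ χ t / t}.Nonempty := by
      by_contra h
      rw [Set.not_nonempty_iff_eq_empty] at h
      rw [h, Real.sSup_empty] at hχlin
      exact lt_irrefl 0 hχlin
    have hbdd : BddAbove {a : ℝ | ∀ᶠ t in atTop, a ≤ χ t / t} := by
      by_contra h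
      rw [Real.sSup_of_not_bddAbove h] at hχlin
      exact lt_irrefl 0 hχlin
    obtain ⟨δ, hδ, hδ0⟩ := exists_lt_of_lt_csSup hne hχlin
    exact ⟨δ, hδ, hδ0⟩
  obtain ⟨T₀, hT₀⟩ := Filter.eventually_atTop.mp hδS
  -- dimension and exponent
  set p : ℝ := (c : ℝ) + 1 with hp
  have hcpos : 0 < c := by omega
  have hp_pos : (0:ℝ) < p := by positivity
  have hS : MeasurableSet {y : EuclideanSpace ℝ (Fin c) | 1 ≤ ‖y‖} :=
    (isClosed_le continuous_const continuous_norm).measurableSet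
  -- integrable dominating function
  have hgint : Integrable (fun y : EuclideanSpace ℝ (Fin c) =>
      (2:ℝ) ^ p * (1 + ‖y‖) ^ (-p)) := by
    refine (integrable_one_add_norm (E := EuclideanSpace ℝ (Fin c)) ?_).const_mul _
    rw [finrank_euclideanSpace_fin]
    simp [hp]
  set M : ℝ := ∫ y in {y : EuclideanSpace ℝ (Fin c) | 1 ≤ ‖y‖},
      (2:ℝ) ^ p * (1 + ‖y‖) ^ (-p) with hM
  -- measurability of the integrand
  have hmeas : ∀ t : ℝ, AEStronglyMeasurable
      (fun y : EuclideanSpace ℝ (Fin c) => Real.exp (-(χ (t + t * Real.log (‖y‖ ^ 2)))))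
      (volume.restrict {y : EuclideanSpace ℝ (Fin c) | 1 ≤ ‖y‖}) := by
    intro t
    apply Measurable.aestronglyMeasurable
    exact (Real.measurable_exp.comp ((hχcont.measurable.comp
      ((measurable_const.add (measurable_const.mul
        (Real.measurable_log.comp ((measurable_norm.pow_const 2)))))))).neg)
  -- key pointwise bound for large t
  have hkey : ∀ t : ℝ, max (max T₀ 1) (p / (2 * δ)) ≤ t →
      ∀ y : EuclideanSpace ℝ (Fin c), 1 ≤ ‖y‖ →
      Real.exp (-(χ (t + t * Real.log (‖y‖ ^ 2)))) ≤
        Real.exp (-(δ * t)) * ((2:ℝ) ^ p * (1 + ‖y‖) ^ (-p)) := by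
    intro t ht y hy
    have ht1 : (1:ℝ) ≤ t := le_trans (le_trans (le_max_right _ _) (le_max_left _ _)) ht
    have htT₀ : T₀ ≤ t := le_trans (le_trans (le_max_left _ _) (le_max_left _ _)) ht
    have htp : p ≤ 2 * δ * t := by
      have h1 : p / (2 * δ) ≤ t := le_trans (le_max_right _ _) ht
      have h2 : (0:ℝ) < 2 * δ := by linarith
      calc p = (p / (2 * δ)) * (2 * δ) := by field_simp
        _ ≤ t * (2 * δ) := by nlinarith
        _ = 2 * δ * t := by ring
    have hlog : 0 ≤ Real.log (‖y‖ ^ 2) := by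
      apply Real.log_nonneg; nlinarith
    set s : ℝ := t + t * Real.log (‖y‖ ^ 2) with hs
    have hts : t ≤ s := by nlinarith
    have hχs : δ * s ≤ χ s := by
      have := hT₀ s (le_trans htT₀ hts)
      have hspos : (0:ℝ) < s := by linarith
      rw [le_div_iff₀ hspos] at this
      linarith
    have hy0 : (0:ℝ) < ‖y‖ := by linarith
    -- exp(-χ s) ≤ exp(-δ s)
    have step1 : Real.exp (-(χ s)) ≤ Real.exp (-(δ * s)) :=
      Real.exp_le_exp.mpr (by linarith)
    -- exp(-δ s) = exp(-δ t) * ‖y‖ ^ (-(2 δ t))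
    have step2 : Real.exp (-(δ * s)) = Real.exp (-(δ * t)) * ‖y‖ ^ (-(2 * δ * t)) := by
      rw [Real.rpow_def_of_pos hy0]
      rw [← Real.exp_add]
      congr 1
      have hlogeq : Real.log (‖y‖ ^ 2) = 2 * Real.log ‖y‖ := by
        rw [Real.log_pow]; push_cast; ring
      rw [hs, hlogeq]; ring
    -- ‖y‖ ^ (-(2δt)) ≤ ‖y‖ ^ (-p)
    have step3 : ‖y‖ ^ (-(2 * δ * t)) ≤ ‖y‖ ^ (-p) :=
      Real.rpow_le_rpow_of_exponent_le hy (by linarith)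
    -- ‖y‖ ^ (-p) ≤ 2^p * (1+‖y‖)^(-p)
    have step4 : ‖y‖ ^ (-p) ≤ (2:ℝ) ^ p * (1 + ‖y‖) ^ (-p) := by
      have h1 : (1 + ‖y‖) ^ p ≤ (2 * ‖y‖) ^ p :=
        Real.rpow_le_rpow (by linarith) (by linarith) hp_pos.le
      have h2 : ((2:ℝ) * ‖y‖) ^ p = 2 ^ p * ‖y‖ ^ p :=
        Real.mul_rpow (by norm_num) hy0.le
      have h3 : (1 + ‖y‖) ^ p ≤ 2 ^ p * ‖y‖ ^ p := h2 ▸ h1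
      rw [Real.rpow_neg hy0.le, Real.rpow_neg (by linarith)]
      rw [inv_eq_one_div, inv_eq_one_div, mul_one_div,
        div_le_div_iff₀ (Real.rpow_pos_of_pos hy0 p)
          (Real.rpow_pos_of_pos (by linarith) p)]
      nlinarith
    calc Real.exp (-(χ s)) ≤ Real.exp (-(δ * s)) := step1
      _ = Real.exp (-(δ * t)) * ‖y‖ ^ (-(2 * δ * t)) := step2
      _ ≤ Real.exp (-(δ * t)) * ‖y‖ ^ (-p) := by
          exact mul_le_mul_of_nonneg_left step3 (Real.exp_nonneg _)
      _ ≤ Real.exp (-(δ * t)) * ((2:ℝ) ^ p * (1 + ‖y‖) ^ (-p)) :=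
          mul_le_mul_of_nonneg_left step4 (Real.exp_nonneg _)
  -- squeeze
  have hub : Tendsto (fun t : ℝ => Real.exp (-(δ * t)) * M) atTop (nhds 0) := by
    have h1 : Tendsto (fun t : ℝ => -(δ * t)) atTop atBot := by
      apply tendsto_neg_atBot_iff.mpr
      exact (tendsto_id.const_mul_atTop hδpos)
    have := (Real.tendsto_exp_atBot.comp h1).mul_const M
    simpa using this
  apply squeeze_zero' (g := fun t => Real.exp (-(δ * t)) * M)
  · filter_upwards with t
    apply setIntegral_nonneg hS
    intro y _; exact (Real.exp_nonneg _)
  · filter_upwards [eventually_ge_atTop (max (max T₀ 1) (p / (2 * δ)))] with t ht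
    have hint : IntegrableOn
        (fun y : EuclideanSpace ℝ (Fin c) => Real.exp (-(χ (t + t * Real.log (‖y‖ ^ 2)))))
        {y : EuclideanSpace ℝ (Fin c) | 1 ≤ ‖y‖} := by
      apply Integrable.mono' ((hgint.const_mul (Real.exp (-(δ * t)))).integrableOn)
        (hmeas t)
      refine (ae_restrict_iff' hS).mpr (Filter.Eventually.of_forall ?_)
      intro y hy
      rw [Real.norm_eq_abs, abs_of_nonneg (Real.exp_nonneg _)]
      exact hkey t ht y hy
    calc ∫ y in {y : EuclideanSpace ℝ (Fin c) | 1 ≤ ‖y‖},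
          Real.exp (-(χ (t + t * Real.log (‖y‖ ^ 2))))
        ≤ ∫ y in {y : EuclideanSpace ℝ (Fin c) | 1 ≤ ‖y‖},
          Real.exp (-(δ * t)) * ((2:ℝ) ^ p * (1 + ‖y‖) ^ (-p)) := by
          apply setIntegral_mono_on hint
            ((hgint.const_mul (Real.exp (-(δ * t)))).integrableOn) hS
          intro y hy; exact hkey t ht y hy
      _ = Real.exp (-(δ * t)) * M := by
          rw [hM, ← integral_const_mul]
  · exact hub
end
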